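/- Let C > 0 and let b : (0, ∞) → ℝ be a function satisfying the functional equation b(s)·b(s+2) = (s+1)² for all s > 0 and the inequality s < b(s) for all s > C. Then for every s > 0, b(s) equals the infinite product (s+1)·∏_{n=1}^∞ ((s+4n−3)(s+4n+1))/((s+4n−1)²), and this value also equals the continued fraction s + K_{n=1}^∞ ((2n−1)²/(2s)), i.e. the limit of the convergents of the generalized continued fraction with integer part s, partial numerators a_n = (2n−1)² and partial denominators b_n = 2s. -/

import Mathlib

open Filter Real

/-- Numerators of the convergents of a generalized continued fraction with
integer part `b₀`, partial numerators `a n` and partial denominators `b n` (for `n ≥ 1`). -/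
noncomputable def cfNum (b₀ : ℝ) (a b : ℕ → ℝ) : ℕ → ℝ
  | 0 => b₀
  | 1 => b 1 * b₀ + a 1
  | n + 2 => b (n + 2) * cfNum b₀ a b (n + 1) + a (n + 2) * cfNum b₀ a b n

/-- Denominators of the convergents of a generalized continued fraction. -/
noncomputable def cfDen (a b : ℕ → ℝ) : ℕ → ℝ
  | 0 => 1
  | 1 => b 1
  | n + 2 => b (n + 2) * cfDen a b (n + 1) + a (n + 2) * cfDen a b n

/-- `IsCFLimit b₀ a b L` means: the convergents of the generalized continued fraction
`b₀ + a 1 / (b 1 + a 2 / (b 2 + ⋯))` tend to `L`. -/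
def IsCFLimit (b₀ : ℝ) (a b : ℕ → ℝ) (L : ℝ) : Prop :=
  Filter.Tendsto (fun n => cfNum b₀ a b n / cfDen a b n) Filter.atTop (nhds L)

noncomputable def aaf : ℕ → ℝ := fun n => (2 * (n : ℝ) - 1) ^ 2
noncomputable def pp (s : ℝ) : ℕ → ℝ := cfNum s aaf (fun _ => 2 * s)
noncomputable def qq (s : ℝ) : ℕ → ℝ := cfDen aaf (fun _ => 2 * s)
noncomputable def AA : ℕ → ℝ := fun m => (∏ i ∈ Finset.range m, (2 * (i : ℝ) + 1)) ^ 2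
noncomputable def xx (s : ℝ) (n : ℕ) : ℝ := pp s n / qq s n
lemma pp_zero (s : ℝ) : pp s 0 = s := rfl
lemma pp_one (s : ℝ) : pp s 1 = 2 * s * s + 1 := by
  show 2 * s * s + aaf 1 = _
  norm_num [aaf]
lemma pp_step (s : ℝ) (n : ℕ) :
    pp s (n + 2) = 2 * s * pp s (n + 1) + aaf (n + 2) * pp s n := rfl
lemma qq_zero (s : ℝ) : qq s 0 = 1 := rfl
lemma qq_one (s : ℝ) : qq s 1 = 2 * s := rfl
lemma qq_step (s : ℝ) (n : ℕ) :
    qq s (n + 2) = 2 * s * qq s (n + 1) + aaf (n + 2) * qq s n := rfl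
lemma aaf_succ (n : ℕ) : aaf (n + 1) = (2 * (n : ℝ) + 1) ^ 2 := by
  simp only [aaf]; push_cast; ring
lemma AA_zero : AA 0 = 1 := by simp [AA]
lemma AA_succ (n : ℕ) : AA (n + 1) = AA n * (2 * (n : ℝ) + 1) ^ 2 := by
  simp only [AA, Finset.prod_range_succ]; ring
lemma AA_pos (n : ℕ) : 0 < AA n := by
  induction n with
  | zero => norm_num [AA_zero]
  | succ k ih => rw [AA_succ]; positivity
lemma aaf_pos (n : ℕ) : 0 < aaf (n + 1) := by rw [aaf_succ]; positivity
lemma qq_pos (s : ℝ) (hs : 0 < s) : ∀ n, 0 < qq s n := by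
  have key : ∀ n, 0 < qq s n ∧ 0 < qq s (n + 1) := by
    intro n
    induction n with
    | zero => exact ⟨by rw [qq_zero]; norm_num, by rw [qq_one]; positivity⟩
    | succ k ih =>
      refine ⟨ih.2, ?_⟩
      rw [qq_step]
      have := aaf_pos (k + 1)
      nlinarith [ih.1, ih.2]
  exact fun n => (key n).1

-- determinant identity
lemma det_id (s : ℝ) : ∀ n : ℕ,
    pp s (n + 1) * qq s n - pp s n * qq s (n + 1) = (-1) ^ n * AA (n + 1) := by
  intro n
  induction n with
  | zero =>
    rw [pp_one, pp_zero, qq_zero, qq_one, AA_succ, AA_zero]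
    norm_num
    ring
  | succ k ih =>
    rw [pp_step, qq_step, AA_succ (k + 1), aaf_succ (k + 1)]
    push_cast
    linear_combination (-(2 * ((k : ℝ) + 1) + 1) ^ 2) * ih

lemma twostep_id (s : ℝ) (n : ℕ) :
    pp s (n + 2) * qq s n - pp s n * qq s (n + 2) = (-1) ^ n * (2 * s * AA (n + 1)) := by
  have h := det_id s n
  rw [pp_step, qq_step]
  linear_combination (2 * s) * h

-- gap formulas
lemma xx_gap (s : ℝ) (hs : 0 < s) (n : ℕ) :
    xx s (n + 1) - xx s n = (-1) ^ n * AA (n + 1) / (qq s n * qq s (n + 1)) := by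
  have h0 := qq_pos s hs n
  have h1 := qq_pos s hs (n + 1)
  rw [xx, xx, div_sub_div _ _ (ne_of_gt h1) (ne_of_gt h0)]
  rw [show pp s (n+1) * qq s n - qq s (n+1) * pp s n
      = pp s (n + 1) * qq s n - pp s n * qq s (n + 1) by ring, det_id]
  rw [mul_comm (qq s (n+1)) (qq s n)]

lemma xx_gap2 (s : ℝ) (hs : 0 < s) (n : ℕ) :
    xx s (n + 2) - xx s n = (-1) ^ n * (2 * s * AA (n + 1)) / (qq s n * qq s (n + 2)) := by
  have h0 := qq_pos s hs n
  have h2 := qq_pos s hs (n + 2)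
  rw [xx, xx, div_sub_div _ _ (ne_of_gt h2) (ne_of_gt h0)]
  rw [show pp s (n+2) * qq s n - qq s (n+2) * pp s n
      = pp s (n + 2) * qq s n - pp s n * qq s (n + 2) by ring, twostep_id]
  rw [mul_comm (qq s (n+2)) (qq s n)]

-- V and W products
noncomputable def VV : ℕ → ℝ := fun k => ∏ j ∈ Finset.range k, (4 * (j : ℝ) + 1)
noncomputable def WW : ℕ → ℝ := fun k => ∏ j ∈ Finset.range k, (4 * (j : ℝ) + 3)

lemma VV_pos (k : ℕ) : 0 < VV k := Finset.prod_pos (fun j _ => by positivity)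
lemma WW_pos (k : ℕ) : 0 < WW k := Finset.prod_pos (fun j _ => by positivity)
lemma VV_succ (k : ℕ) : VV (k + 1) = VV k * (4 * (k : ℝ) + 1) := Finset.prod_range_succ _ _
lemma WW_succ (k : ℕ) : WW (k + 1) = WW k * (4 * (k : ℝ) + 3) := Finset.prod_range_succ _ _

lemma WW_sq_ge (k : ℕ) : (4 * (k : ℝ) + 1) * VV k ^ 2 ≤ WW k ^ 2 := by
  induction k with
  | zero => simp [VV, WW]
  | succ k ih =>
    rw [VV_succ, WW_succ]
    push_cast
    have h1 : (0:ℝ) < 4 * (k : ℝ) + 1 := by positivity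
    have h2 := VV_pos k
    nlinarith [mul_le_mul_of_nonneg_left ih (by positivity : (0:ℝ) ≤ (4*(k:ℝ)+3)^2),
      mul_pos (mul_pos h1 h2) h2]

-- product over range (2k+1) of odd numbers
lemma prod_odd_split (k : ℕ) :
    ∏ i ∈ Finset.range (2 * k + 1), (2 * (i : ℝ) + 1) = VV (k + 1) * WW k := by
  induction k with
  | zero => simp [VV, WW, VV_succ]
  | succ k ih =>
    have h : 2 * (k + 1) + 1 = (2 * k + 1) + 1 + 1 := by ring
    rw [h, Finset.prod_range_succ, Finset.prod_range_succ, ih, VV_succ (k + 1), WW_succ k,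
      VV_succ k]
    push_cast
    ring

lemma AA_odd (k : ℕ) : AA (2 * k + 1) = (VV (k + 1) * WW k) ^ 2 := by
  rw [AA, prod_odd_split]

-- q at even indices lower bound
lemma qq_even_ge (s : ℝ) (hs : 0 < s) (k : ℕ) : WW k ^ 2 ≤ qq s (2 * k) := by
  induction k with
  | zero => simp [WW, qq_zero]
  | succ k ih =>
    have h : 2 * (k + 1) = 2 * k + 2 := by ring
    rw [h, qq_step, WW_succ]
    have ha : aaf (2 * k + 2) = (4 * (k : ℝ) + 3) ^ 2 := by
      rw [show 2 * k + 2 = (2 * k + 1) + 1 by ring, aaf_succ]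
      push_cast; ring
    rw [ha]
    have hq1 := qq_pos s hs (2 * k + 1)
    have hw := WW_pos k
    nlinarith [ih]

-- key: (4k+1) * qq(2k)^2 ≥ AA(2k+1)
lemma qq_sq_ge_AA (s : ℝ) (hs : 0 < s) (k : ℕ) :
    AA (2 * k + 1) ≤ (4 * (k : ℝ) + 1) * qq s (2 * k) ^ 2 := by
  rw [AA_odd, VV_succ]
  have h1 := qq_even_ge s hs k
  have h2 := WW_sq_ge k
  have h3 := VV_pos k
  have h4 := WW_pos k
  have h5 : (0:ℝ) < 4 * (k : ℝ) + 1 := by positivity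
  have h6 : WW k ^ 2 ≤ qq s (2*k) := h1
  have h7 : (0:ℝ) ≤ qq s (2*k) := le_of_lt (qq_pos s hs _)
  calc (VV k * (4 * (k:ℝ) + 1) * WW k) ^ 2
      = (4 * (k:ℝ) + 1) * (((4 * (k:ℝ) + 1) * VV k ^ 2) * WW k ^ 2) := by ring
    _ ≤ (4 * (k:ℝ) + 1) * (WW k ^ 2 * WW k ^ 2) := by
        apply mul_le_mul_of_nonneg_left _ (le_of_lt h5)
        apply mul_le_mul_of_nonneg_right h2 (by positivity)
    _ ≤ (4 * (k:ℝ) + 1) * qq s (2 * k) ^ 2 := by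
        apply mul_le_mul_of_nonneg_left _ (le_of_lt h5)
        calc WW k ^ 2 * WW k ^ 2 ≤ qq s (2*k) * qq s (2*k) := by
              apply mul_le_mul h6 h6 (by positivity) h7
          _ = qq s (2*k) ^ 2 := by ring

noncomputable def DD (s : ℝ) (n : ℕ) : ℝ := qq s n * qq s (n + 1) / AA (n + 1)

lemma DD_pos (s : ℝ) (hs : 0 < s) (n : ℕ) : 0 < DD s n := by
  have := qq_pos s hs n; have := qq_pos s hs (n + 1); have := AA_pos (n + 1)
  exact div_pos (by positivity) (AA_pos (n + 1))

lemma DD_succ (s : ℝ) (hs : 0 < s) (n : ℕ) :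
    DD s (n + 1) = DD s n + 2 * s * qq s (n + 1) ^ 2 / AA (n + 2) := by
  have hA1 : AA (n + 1) ≠ 0 := ne_of_gt (AA_pos _)
  have hA2 : AA (n + 2) ≠ 0 := ne_of_gt (AA_pos _)
  have hrec : AA (n + 2) = AA (n + 1) * (2 * ((n:ℝ) + 1) + 1) ^ 2 := by
    have := AA_succ (n + 1); push_cast at this ⊢; linarith [this]
  have ha : aaf (n + 2) = (2 * ((n:ℝ) + 1) + 1) ^ 2 := by
    rw [show n + 2 = (n + 1) + 1 by ring, aaf_succ]; push_cast; ring
  rw [DD, DD, qq_step, ha]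
  have h2 : ((2 * ((n:ℝ) + 1) + 1) ^ 2) ≠ 0 := by positivity
  simp only [show n + 1 + 1 = n + 2 from rfl, hrec]
  field_simp
  ring

lemma DD_mono (s : ℝ) (hs : 0 < s) : Monotone (DD s) := by
  apply monotone_nat_of_le_succ
  intro n
  rw [DD_succ s hs n]
  have h : 0 < 2 * s * qq s (n + 1) ^ 2 / AA (n + 2) := by
    have := qq_pos s hs (n + 1); have := AA_pos (n + 2); positivity
  linarith

lemma DD_even_ge (s : ℝ) (hs : 0 < s) (k : ℕ) :
    2 * s * ∑ j ∈ Finset.range k, (1 : ℝ) / (9 * ((j : ℝ) + 1)) ≤ DD s (2 * k) := by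
  induction k with
  | zero => simp; linarith [DD_pos s hs 0]
  | succ k ih =>
    have e2 : 2 * (k + 1) = 2 * k + 2 := by omega
    have e3 : 2 * (k + 1) + 1 = 2 * k + 3 := by omega
    have hsucc := DD_succ s hs (2 * k + 1)
    have e4 : 2 * k + 1 + 1 = 2 * k + 2 := by omega
    have e5 : 2 * k + 1 + 2 = 2 * k + 3 := by omega
    rw [e4, e5] at hsucc
    have hkey := qq_sq_ge_AA s hs (k + 1)
    rw [e2] at hkey
    rw [show 2*k+2+1 = 2*k+3 by omega] at hkey
    have hq := qq_pos s hs (2 * k + 2)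
    have hA := AA_pos (2 * k + 3)
    have hfrac : (1:ℝ)/(9*((k:ℝ)+1)) ≤ qq s (2*k+2)^2 / AA (2*k+3) := by
      rw [div_le_div_iff₀ (by positivity) hA]
      push_cast at hkey
      nlinarith [hkey, sq_nonneg (qq s (2*k+2))]
    have step1 : DD s (2*k) ≤ DD s (2*k+1) := DD_mono s hs (Nat.le_succ _)
    rw [e2, hsucc, Finset.sum_range_succ]
    push_cast
    have hle : 2*s*((1:ℝ)/(9*((k:ℝ)+1))) ≤ 2*s*(qq s (2*k+2)^2 / AA (2*k+3)) :=
      mul_le_mul_of_nonneg_left hfrac (by positivity)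
    have hms : 2*s*(qq s (2*k+2)^2 / AA (2*k+3)) = 2*s*qq s (2*k+2)^2 / AA (2*k+3) := by ring
    rw [hms] at hle
    rw [mul_add]
    linarith [ih, step1, hle]

lemma DD_tendsto (s : ℝ) (hs : 0 < s) : Tendsto (DD s) atTop atTop := by
  apply tendsto_atTop_atTop_of_monotone (DD_mono s hs)
  intro B
  have hharm : Tendsto (fun k => 2 * s * ∑ j ∈ Finset.range k, (1:ℝ) / (9 * ((j:ℝ) + 1)))
      atTop atTop := by
    have h1 : Tendsto (fun k => ∑ j ∈ Finset.range k, (1:ℝ) / (9 * ((j:ℝ) + 1))) atTop atTop := by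
      have heq : ∀ k, ∑ j ∈ Finset.range k, (1:ℝ) / (9 * ((j:ℝ) + 1))
          = (1/9) * ∑ j ∈ Finset.range k, (1:ℝ) / ((j:ℝ) + 1) := by
        intro k
        rw [Finset.mul_sum]
        refine Finset.sum_congr rfl fun j _ => ?_
        field_simp
      simp only [heq]
      apply Tendsto.const_mul_atTop (by norm_num : (0:ℝ) < 1/9)
      exact Real.tendsto_sum_range_one_div_nat_succ_atTop
    exact Tendsto.const_mul_atTop (by positivity) h1
  obtain ⟨k, hk⟩ := (hharm.eventually_ge_atTop B).exists
  exact ⟨2 * k, le_trans hk (DD_even_ge s hs k)⟩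

lemma gap_eq (s : ℝ) (hs : 0 < s) (n : ℕ) :
    AA (n + 1) / (qq s n * qq s (n + 1)) = (DD s n)⁻¹ := by
  rw [DD, inv_div]

lemma gap_tendsto (s : ℝ) (hs : 0 < s) :
    Tendsto (fun n => AA (n + 1) / (qq s n * qq s (n + 1))) atTop (nhds 0) := by
  simp only [gap_eq s hs]
  exact (DD_tendsto s hs).inv_tendsto_atTop

lemma xx_even_mono (s : ℝ) (hs : 0 < s) : Monotone (fun k => xx s (2 * k)) := by
  apply monotone_nat_of_le_succ
  intro k
  have h := xx_gap2 s hs (2 * k)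
  have hq0 := qq_pos s hs (2 * k)
  have hq2 := qq_pos s hs (2 * k + 2)
  have hA := AA_pos (2 * k + 1)
  have hpos : (0:ℝ) ≤ (-1) ^ (2 * k) * (2 * s * AA (2 * k + 1)) / (qq s (2 * k) * qq s (2 * k + 2)) := by
    rw [pow_mul]; norm_num
    positivity
  have e : 2 * (k + 1) = 2 * k + 2 := by omega
  rw [e]
  linarith [h, hpos]

lemma xx_odd_anti (s : ℝ) (hs : 0 < s) : Antitone (fun k => xx s (2 * k + 1)) := by
  apply antitone_nat_of_succ_le
  intro k
  have h := xx_gap2 s hs (2 * k + 1)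
  have hq0 := qq_pos s hs (2 * k + 1)
  have hq2 := qq_pos s hs (2 * k + 3)
  have hA := AA_pos (2 * k + 2)
  have hneg : (-1) ^ (2 * k + 1) * (2 * s * AA (2 * k + 2)) / (qq s (2 * k + 1) * qq s (2 * k + 1 + 2)) ≤ 0 := by
    have e1 : ((-1:ℝ)) ^ (2 * k + 1) = -1 := by rw [pow_succ, pow_mul]; norm_num
    rw [e1, show 2*k+1+2 = 2*k+3 by omega]
    have h3 := qq_pos s hs (2 * k + 3)
    have h1 : 0 ≤ 2*s*AA (2*k+2) / (qq s (2*k+1) * qq s (2*k+3)) := by positivity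
    have e2 : (-1) * (2*s*AA (2*k+2)) / (qq s (2*k+1) * qq s (2*k+3))
        = -(2*s*AA (2*k+2) / (qq s (2*k+1) * qq s (2*k+3))) := by ring
    rw [e2]; linarith
  have e : 2 * (k + 1) + 1 = 2 * k + 1 + 2 := by omega
  rw [e]
  linarith [h, hneg]

lemma xx_even_lt_odd (s : ℝ) (hs : 0 < s) (k : ℕ) : xx s (2 * k) ≤ xx s (2 * k + 1) := by
  have h := xx_gap s hs (2 * k)
  have hq0 := qq_pos s hs (2 * k)
  have hq1 := qq_pos s hs (2 * k + 1)
  have hA := AA_pos (2 * k + 1)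
  have hpos : (0:ℝ) ≤ (-1) ^ (2 * k) * AA (2 * k + 1) / (qq s (2 * k) * qq s (2 * k + 1)) := by
    rw [pow_mul]; norm_num
    positivity
  linarith [h, hpos]

lemma xx_even_le_x1 (s : ℝ) (hs : 0 < s) (k : ℕ) : xx s (2 * k) ≤ xx s 1 := by
  calc xx s (2 * k) ≤ xx s (2 * k + 1) := xx_even_lt_odd s hs k
    _ ≤ xx s (2 * 0 + 1) := xx_odd_anti s hs (Nat.zero_le k)
    _ = xx s 1 := by norm_num

noncomputable def LL (s : ℝ) : ℝ := ⨆ k, xx s (2 * k)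

lemma LL_bdd (s : ℝ) (hs : 0 < s) : BddAbove (Set.range (fun k => xx s (2 * k))) :=
  ⟨xx s 1, by rintro y ⟨k, rfl⟩; exact xx_even_le_x1 s hs k⟩

lemma xx_even_tendsto (s : ℝ) (hs : 0 < s) :
    Tendsto (fun k => xx s (2 * k)) atTop (nhds (LL s)) :=
  tendsto_atTop_ciSup (xx_even_mono s hs) (LL_bdd s hs)

lemma xx_odd_tendsto (s : ℝ) (hs : 0 < s) :
    Tendsto (fun k => xx s (2 * k + 1)) atTop (nhds (LL s)) := by
  have heq : ∀ k, xx s (2 * k + 1)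
      = xx s (2 * k) + AA (2 * k + 1) / (qq s (2 * k) * qq s (2 * k + 1)) := by
    intro k
    have h := xx_gap s hs (2 * k)
    rw [pow_mul] at h; norm_num at h
    linarith [h]
  simp only [heq]
  have h2 : Tendsto (fun k : ℕ => AA (2 * k + 1) / (qq s (2 * k) * qq s (2 * k + 1))) atTop (nhds 0) := by
    have hm : StrictMono (fun k : ℕ => 2 * k) := fun a b h => by dsimp only; omega
    exact (gap_tendsto s hs).comp hm.tendsto_atTop
  have := (xx_even_tendsto s hs).add h2
  simpa using this

lemma xx_tendsto (s : ℝ) (hs : 0 < s) : Tendsto (xx s) atTop (nhds (LL s)) := by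
  rw [Metric.tendsto_atTop]
  intro ε hε
  have he := Metric.tendsto_atTop.mp (xx_even_tendsto s hs) ε hε
  have ho := Metric.tendsto_atTop.mp (xx_odd_tendsto s hs) ε hε
  obtain ⟨N₁, hN₁⟩ := he
  obtain ⟨N₂, hN₂⟩ := ho
  refine ⟨2 * N₁ + 2 * N₂ + 2, fun n hn => ?_⟩
  rcases Nat.even_or_odd n with ⟨m, hm⟩ | ⟨m, hm⟩
  · have : N₁ ≤ m := by omega
    have := hN₁ m this
    rwa [show 2 * m = n by omega] at this
  · have : N₂ ≤ m := by omega
    have := hN₂ m this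
    rwa [show 2 * m + 1 = n by omega] at this

lemma pp_two (s : ℝ) : pp s 2 = 2 * s * (2 * s * s + 1) + 9 * s := by
  have h := pp_step s 0
  norm_num [aaf] at h
  rw [h, pp_one, pp_zero]

lemma qq_two (s : ℝ) : qq s 2 = 2 * s * (2 * s) + 9 := by
  have h := qq_step s 0
  norm_num [aaf] at h
  rw [h, qq_one, qq_zero]
  norm_num

lemma AA_one : AA 1 = 1 := by norm_num [AA, Finset.prod_range_succ]
lemma AA_two : AA 2 = 9 := by norm_num [AA, Finset.prod_range_succ]

def Sprop (s : ℝ) (n : ℕ) : Prop :=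
  pp s n * pp (s+2) n - (s+1)^2 * (qq s n * qq (s+2) n) = (-1)^(n+1) * AA (n+1)
  ∧ pp s (n+1) * pp (s+2) n - (s+1)^2 * (qq s (n+1) * qq (s+2) n)
      = (-1)^(n+1) * AA (n+1) * (s - 2*((n:ℝ)+1))
  ∧ pp s n * pp (s+2) (n+1) - (s+1)^2 * (qq s n * qq (s+2) (n+1))
      = (-1)^(n+1) * AA (n+1) * (s + 2*((n:ℝ)+2))

lemma EMN (s : ℝ) : ∀ n : ℕ, Sprop s n := by
  have key : ∀ n, Sprop s n ∧ Sprop s (n+1) := by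
    intro n
    induction n with
    | zero =>
      constructor
      · refine ⟨?_, ?_, ?_⟩ <;>
        · norm_num [Sprop, pp_zero, pp_one, pp_two, qq_zero, qq_one, qq_two, AA_one, AA_two]
          try ring
      · refine ⟨?_, ?_, ?_⟩ <;>
        · norm_num [Sprop, pp_zero, pp_one, pp_two, qq_zero, qq_one, qq_two, AA_one, AA_two]
          try ring
    | succ n ih =>
      obtain ⟨⟨hE0, hM0, hN0⟩, ⟨hE1, hM1, hN1⟩⟩ := ih
      refine ⟨⟨hE1, hM1, hN1⟩, ?_, ?_, ?_⟩
      all_goals {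
        have ha2 : aaf (n+2) = (2*(n:ℝ)+3)^2 := by
          have h := aaf_succ (n+1); rw [show n+1+1 = n+2 by omega] at h
          rw [h]; push_cast; ring
        have ha3 : aaf (n+3) = (2*(n:ℝ)+5)^2 := by
          have h := aaf_succ (n+2); rw [show n+2+1 = n+3 by omega] at h
          rw [h]; push_cast; ring
        have hA2 : AA (n+2) = AA (n+1) * (2*(n:ℝ)+3)^2 := by
          have h := AA_succ (n+1); rw [show n+1+1 = n+2 by omega] at h
          rw [h]; push_cast; ring
        have hA3 : AA (n+3) = AA (n+1) * (2*(n:ℝ)+3)^2 * (2*(n:ℝ)+5)^2 := by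
          have h := AA_succ (n+2); rw [show n+2+1 = n+3 by omega] at h
          rw [h, hA2]; push_cast; ring
        rw [show n+1+1 = n+2 by omega] at hE1 hM1 hN1
        rw [hA2] at hE1 hM1 hN1
        push_cast at hM1 hN1
        have hE2 : pp s (n+2) * pp (s+2) (n+2) - (s+1)^2 * (qq s (n+2) * qq (s+2) (n+2))
            = (-1)^(n+3) * (AA (n+1) * (2*(n:ℝ)+3)^2 * (2*(n:ℝ)+5)^2) := by
          rw [pp_step s n, pp_step (s+2) n, qq_step s n, qq_step (s+2) n, ha2]
          linear_combination (4*s*(s+2)) * hE1 + ((2*(n:ℝ)+3)^2*(2*s)) * hM0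
            + ((2*(n:ℝ)+3)^2*(2*(s+2))) * hN0 + ((2*(n:ℝ)+3)^2)^2 * hE0
        have hps : pp s (n+3) = 2*s*pp s (n+2) + (2*(n:ℝ)+5)^2 * pp s (n+1) := by
          have h := pp_step s (n+1)
          rw [show n+1+2 = n+3 by omega, show n+1+1 = n+2 by omega, ha3] at h
          exact h
        have hqs : qq s (n+3) = 2*s*qq s (n+2) + (2*(n:ℝ)+5)^2 * qq s (n+1) := by
          have h := qq_step s (n+1)
          rw [show n+1+2 = n+3 by omega, show n+1+1 = n+2 by omega, ha3] at h
          exact h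
        have hps2 : pp (s+2) (n+3) = 2*(s+2)*pp (s+2) (n+2) + (2*(n:ℝ)+5)^2 * pp (s+2) (n+1) := by
          have h := pp_step (s+2) (n+1)
          rw [show n+1+2 = n+3 by omega, show n+1+1 = n+2 by omega, ha3] at h
          exact h
        have hqs2 : qq (s+2) (n+3) = 2*(s+2)*qq (s+2) (n+2) + (2*(n:ℝ)+5)^2 * qq (s+2) (n+1) := by
          have h := qq_step (s+2) (n+1)
          rw [show n+1+2 = n+3 by omega, show n+1+1 = n+2 by omega, ha3] at h
          exact h
        first
        | -- E component
          (show pp s (n+2) * pp (s+2) (n+2) - (s+1)^2 * (qq s (n+2) * qq (s+2) (n+2))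
              = (-1)^(n+1+1+1) * AA (n+1+1+1)
           rw [show n+1+1+1 = n+3 by omega, hA3]
           linear_combination hE2)
        | -- M component
          (show pp s (n+1+1+1) * pp (s+2) (n+1+1) - (s+1)^2 * (qq s (n+1+1+1) * qq (s+2) (n+1+1))
              = (-1)^(n+1+1+1) * AA (n+1+1+1) * (s - 2*((↑(n+1+1):ℝ)+1))
           rw [show n+1+1+1 = n+3 by omega, show n+1+1 = n+2 by omega, hA3, hps, hqs]
           push_cast
           linear_combination (2*s) * hE2 + ((2*(n:ℝ)+5)^2) * hN1)
        | -- N component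
          (show pp s (n+1+1) * pp (s+2) (n+1+1+1) - (s+1)^2 * (qq s (n+1+1) * qq (s+2) (n+1+1+1))
              = (-1)^(n+1+1+1) * AA (n+1+1+1) * (s + 2*((↑(n+1+1):ℝ)+2))
           rw [show n+1+1+1 = n+3 by omega, show n+1+1 = n+2 by omega, hA3, hps2, hqs2]
           push_cast
           linear_combination (2*(s+2)) * hE2 + ((2*(n:ℝ)+5)^2) * hM1)
      }
  exact fun n => (key n).1

lemma xx_prod_id (s : ℝ) (hs : 0 < s) (n : ℕ) :
    xx s n * xx (s+2) n = (s+1)^2 + (-1)^(n+1) * (AA (n+1) / (qq s n * qq (s+2) n)) := by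
  have hE := (EMN s n).1
  have hq1 := qq_pos s hs n
  have hq2 := qq_pos (s+2) (by linarith) n
  rw [xx, xx]
  field_simp
  linear_combination hE

lemma LL_mul (s : ℝ) (hs : 0 < s) : LL s * LL (s+2) = (s+1)^2 := by
  have hs2 : (0:ℝ) < s + 2 := by linarith
  -- the error sequence
  set c : ℕ → ℝ := fun n => AA (n+1) / (qq s n * qq (s+2) n) with hc
  have hcpos : ∀ n, 0 ≤ c n := by
    intro n
    have := qq_pos s hs n; have := qq_pos (s+2) hs2 n; have := AA_pos (n+1)
    positivity
  have hprod : Tendsto (fun n => xx s n * xx (s+2) n) atTop (nhds (LL s * LL (s+2))) :=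
    (xx_tendsto s hs).mul (xx_tendsto (s+2) hs2)
  have herr : Tendsto (fun n => (-1:ℝ)^(n+1) * c n) atTop (nhds (LL s * LL (s+2) - (s+1)^2)) := by
    have : ∀ n, (-1:ℝ)^(n+1) * c n = xx s n * xx (s+2) n - (s+1)^2 := by
      intro n; rw [xx_prod_id s hs n]; ring
    simp only [this]
    simpa using hprod.sub_const ((s+1)^2)
  set ℓ := LL s * LL (s+2) - (s+1)^2 with hl
  -- even subsequence: -(c (2k)) → ℓ  hence ℓ ≤ 0
  have hmono : StrictMono (fun k : ℕ => 2 * k) := fun a b h => by dsimp only; omega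
  have heven : Tendsto (fun k => (-1:ℝ)^(2*k+1) * c (2*k)) atTop (nhds ℓ) :=
    herr.comp hmono.tendsto_atTop
  have hodd : Tendsto (fun k => (-1:ℝ)^(2*k+1+1) * c (2*k+1)) atTop (nhds ℓ) := by
    have hmono2 : StrictMono (fun k : ℕ => 2 * k + 1) := fun a b h => by dsimp only; omega
    exact herr.comp hmono2.tendsto_atTop
  have h1 : ℓ ≤ 0 := by
    have : ∀ k, (-1:ℝ)^(2*k+1) * c (2*k) ≤ 0 := by
      intro k
      have e1 : ((-1:ℝ))^(2*k+1) = -1 := by rw [pow_succ, pow_mul]; norm_num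
      rw [e1]; nlinarith [hcpos (2*k)]
    exact le_of_tendsto heven (Filter.Eventually.of_forall this)
  have h2 : 0 ≤ ℓ := by
    have : ∀ k, 0 ≤ (-1:ℝ)^(2*k+1+1) * c (2*k+1) := by
      intro k
      have e1 : ((-1:ℝ))^(2*k+1+1) = 1 := by
        rw [pow_succ, pow_succ, pow_mul]; norm_num
      rw [e1]; nlinarith [hcpos (2*k+1)]
    exact ge_of_tendsto hodd (Filter.Eventually.of_forall this)
  have : ℓ = 0 := le_antisymm h1 h2
  rw [hl] at this
  linarith

lemma LL_ge (s : ℝ) (hs : 0 < s) : s ≤ LL s := by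
  have h := le_ciSup (LL_bdd s hs) 0
  simpa [LL, xx, pp_zero, qq_zero] using h

lemma LL_le (s : ℝ) (hs : 0 < s) : LL s ≤ xx s 1 :=
  ciSup_le (fun k => xx_even_le_x1 s hs k)

lemma LL_le' (s : ℝ) (hs : 0 < s) : LL s ≤ s + 1 / (2 * s) := by
  have h := LL_le s hs
  have : xx s 1 = s + 1 / (2 * s) := by
    rw [xx, pp_one, qq_one]
    field_simp
  linarith [h, this.le, this.ge]

section Bpart
variable (C : ℝ) (b : ℝ → ℝ)
  (hfun : ∀ s : ℝ, 0 < s → b s * b (s + 2) = (s + 1) ^ 2)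
  (hineq : ∀ s : ℝ, C < s → s < b s)

include hfun hineq in
lemma b_bounds : ∀ t : ℝ, 0 < t → t < b t ∧ b t * (t + 2) < (t + 1) ^ 2 := by
  have main : ∀ n : ℕ, ∀ t : ℝ, 0 < t → C < t + 2 * n → t < b t ∧ b t * (t + 2) < (t + 1) ^ 2 := by
    intro n
    induction n with
    | zero =>
      intro t ht hCt
      norm_num at hCt
      have h1 : t < b t := hineq t hCt
      have h2 : t + 2 < b (t + 2) := hineq (t + 2) (by linarith)
      have hfe := hfun t ht
      constructor
      · exact h1
      · nlinarith [h1, h2, hfe]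
    | succ n ih =>
      intro t ht hCt
      have h2 : C < (t + 2) + 2 * n := by push_cast at hCt ⊢; linarith
      obtain ⟨ih1, ih2⟩ := ih (t + 2) (by linarith) h2
      have hfe := hfun t ht
      have hb2pos : 0 < b (t + 2) := by linarith
      have key : t * b (t + 2) < (t + 1) ^ 2 := by nlinarith [ih2, ht]
      have lower : t < b t := by nlinarith [key, hfe, hb2pos]
      have upper : b t * (t + 2) < (t + 1) ^ 2 := by nlinarith [ih1, hfe, lower, ht]
      exact ⟨lower, upper⟩
  intro t ht
  obtain ⟨n, hn⟩ := exists_nat_gt ((C - t) / 2)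
  exact main n t ht (by linarith [hn])

include hfun hineq in
lemma b_lt (t : ℝ) (ht : 0 < t) : b t < t + 1 := by
  obtain ⟨h1, h2⟩ := b_bounds C b hfun hineq t ht
  nlinarith

end Bpart

noncomputable def PP (s : ℝ) (N : ℕ) : ℝ :=
  (s + 1) * ∏ n ∈ Finset.range N,
    ((s + 4 * ((n : ℝ) + 1) - 3) * (s + 4 * ((n : ℝ) + 1) + 1)) /
      (s + 4 * ((n : ℝ) + 1) - 1) ^ 2

lemma PP_succ (s : ℝ) (N : ℕ) : PP s (N + 1)
    = PP s N * (((s + 4 * ((N : ℝ) + 1) - 3) * (s + 4 * ((N : ℝ) + 1) + 1)) /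
      (s + 4 * ((N : ℝ) + 1) - 1) ^ 2) := by
  rw [PP, PP, Finset.prod_range_succ]; ring

section ProdId
variable (C : ℝ) (b : ℝ → ℝ)
  (hfun : ∀ s : ℝ, 0 < s → b s * b (s + 2) = (s + 1) ^ 2)
  (hineq : ∀ s : ℝ, C < s → s < b s)

include hfun hineq in
lemma PP_id (s : ℝ) (hs : 0 < s) :
    ∀ N : ℕ, b s * (s + 4 * (N : ℝ) + 1) = PP s N * b (s + 4 * N) := by
  intro N
  induction N with
  | zero =>
    simp only [PP, Finset.range_zero, Finset.prod_empty, Nat.cast_zero]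
    norm_num
    ring
  | succ N ih =>
    have hb := b_bounds C b hfun hineq
    set t := s + 4 * (N : ℝ) with hts
    have htpos : 0 < t := by positivity
    have ht2 : (0:ℝ) < t + 2 := by linarith
    have hbt := hb t htpos
    have hbt2 := hb (t + 2) ht2
    have hbtpos : 0 < b t := by linarith [hbt.1]
    have hbt2pos : 0 < b (t + 2) := by linarith [hbt2.1]
    have e2 := hfun t htpos
    have e3 := hfun (t + 2) ht2
    rw [show t + 2 + 2 = t + 4 by ring, show t + 2 + 1 = t + 3 by ring] at e3
    have e4 : b s * b (t + 2) = PP s N * (t + 1) := by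
      have ht1 : (t + 1) ≠ 0 := by positivity
      apply mul_right_cancel₀ ht1
      calc b s * b (t + 2) * (t + 1) = b (t + 2) * (b s * (t + 1)) := by ring
        _ = b (t + 2) * (PP s N * b t) := by rw [ih]
        _ = PP s N * (t + 1) * (t + 1) := by linear_combination (PP s N) * e2
    have hcast : (↑(N + 1) : ℝ) = (N : ℝ) + 1 := by push_cast; ring
    have harg : s + 4 * ((N : ℝ) + 1) = t + 4 := by rw [hts]; ring
    rw [hcast, harg, PP_succ]
    have hfact : s + 4 * ((N:ℝ) + 1) - 3 = t + 1 := by rw [hts]; ring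
    have hfact2 : s + 4 * ((N:ℝ) + 1) + 1 = t + 5 := by rw [hts]; ring
    have hfact3 : s + 4 * ((N:ℝ) + 1) - 1 = t + 3 := by rw [hts]; ring
    rw [hfact, hfact2, hfact3]
    have ht3 : ((t + 3) : ℝ) ^ 2 ≠ 0 := by positivity
    have hgoal2 : PP s N * ((t+1)*(t+5)/(t+3)^2) * b (t+4)
        = (PP s N * ((t+1)*(t+5)) * b (t+4))/(t+3)^2 := by ring
    rw [hgoal2, eq_div_iff ht3]
    apply mul_right_cancel₀ (ne_of_gt hbt2pos)
    linear_combination ((t+5)*(t+3)^2) * e4 - (PP s N * (t+1)*(t+5)) * e3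
end ProdId

lemma tendsto_shift (s : ℝ) (hs : 0 < s) :
    Tendsto (fun N : ℕ => s + 4 * (N : ℝ)) atTop atTop := by
  apply tendsto_atTop_add_const_left
  exact tendsto_natCast_atTop_atTop.const_mul_atTop (by norm_num : (0:ℝ) < 4)

lemma tendsto_ratio (s : ℝ) (hs : 0 < s) (a : ℝ) :
    Tendsto (fun N : ℕ => a / (s + 4 * (N : ℝ))) atTop (nhds 0) := by
  have h1 := (tendsto_shift s hs).inv_tendsto_atTop
  have := h1.const_mul a
  simpa [div_eq_mul_inv] using this

section Final
variable (C : ℝ) (b : ℝ → ℝ)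
  (hfun : ∀ s : ℝ, 0 < s → b s * b (s + 2) = (s + 1) ^ 2)
  (hineq : ∀ s : ℝ, C < s → s < b s)

include hfun hineq in
lemma PP_tendsto (s : ℝ) (hs : 0 < s) : Tendsto (PP s) atTop (nhds (b s)) := by
  have hb := b_bounds C b hfun hineq
  have hbs := hb s hs
  have hbspos : 0 < b s := lt_trans hs hbs.1
  have lower : ∀ N, b s ≤ PP s N := by
    intro N
    have hid := PP_id C b hfun hineq s hs N
    set t := s + 4 * (N:ℝ) with hts
    have htp : 0 < t := by positivity
    have hbt := hb t htp
    have hlt := b_lt C b hfun hineq t htp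
    nlinarith [hid, hlt, hbt.1, hbspos]
  have upper : ∀ N, PP s N ≤ b s * (1 + 1 / (s + 4 * (N:ℝ))) := by
    intro N
    have hid := PP_id C b hfun hineq s hs N
    set t := s + 4 * (N:ℝ) with hts
    have htp : 0 < t := by positivity
    have hbt := hb t htp
    have h1 : PP s N * t ≤ b s * (t + 1) := by nlinarith [lower N, hbt.1, hid, hbspos]
    have h2 : b s * (1 + 1 / t) = b s * (t + 1) / t := by field_simp
    rw [h2, le_div_iff₀ htp]
    exact h1
  have hup : Tendsto (fun N : ℕ => b s * (1 + 1 / (s + 4 * (N:ℝ)))) atTop (nhds (b s)) := by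
    have h1 := (tendsto_ratio s hs 1).const_add (1:ℝ)
    have := h1.const_mul (b s)
    simpa using this
  exact tendsto_of_tendsto_of_tendsto_of_le_of_le tendsto_const_nhds hup lower upper

include hfun hineq in
lemma LL_cross (s : ℝ) (hs : 0 < s) : LL s * b (s + 4) = b s * LL (s + 4) := by
  have hs2 : (0:ℝ) < s + 2 := by linarith
  have hs4 : (0:ℝ) < s + 4 := by linarith
  have m1 := LL_mul s hs
  have m2 := LL_mul (s + 2) hs2
  have f1 := hfun s hs
  have f2 := hfun (s + 2) hs2
  rw [show s+2+2 = s+4 by ring, show s+2+1 = s+3 by ring] at m2 f2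
  have hL2 : 0 < LL (s + 2) := lt_of_lt_of_le hs2 (LL_ge (s+2) hs2)
  have hb2 : 0 < b (s + 2) := lt_trans hs2 (b_bounds C b hfun hineq (s+2) hs2).1
  apply mul_right_cancel₀ (ne_of_gt (mul_pos hL2 hb2))
  linear_combination (b (s+2) * b (s+4)) * m1 + (s+1)^2 * f2 - (LL (s+2) * LL (s+4)) * f1
    - (s+1)^2 * m2

include hfun hineq in
lemma LL_iterate (s : ℝ) (hs : 0 < s) :
    ∀ N : ℕ, LL s * b (s + 4 * N) = b s * LL (s + 4 * N) := by
  intro N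
  induction N with
  | zero => norm_num [mul_comm]
  | succ N ih =>
    set t := s + 4 * (N:ℝ) with hts
    have htp : 0 < t := by positivity
    have hcross := LL_cross C b hfun hineq t htp
    have harg : s + 4 * ((N:ℝ) + 1) = t + 4 := by rw [hts]; ring
    push_cast
    rw [harg]
    have hLt : 0 < LL t := lt_of_lt_of_le htp (LL_ge t htp)
    have hbt : 0 < b t := lt_trans htp (b_bounds C b hfun hineq t htp).1
    apply mul_right_cancel₀ (ne_of_gt (mul_pos hLt hbt))
    linear_combination (b (t+4) * LL t) * ih + (b s * LL t) * hcross

include hfun hineq in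
lemma LL_eq_b (s : ℝ) (hs : 0 < s) : LL s = b s := by
  have hb := b_bounds C b hfun hineq
  have hbspos : 0 < b s := lt_trans hs (hb s hs).1
  have hLs : 0 < LL s := lt_of_lt_of_le hs (LL_ge s hs)
  -- bounds for each N
  have hup : ∀ N : ℕ, b s ≤ LL s * (1 + 1 / (s + 4 * (N:ℝ))) := by
    intro N
    set t := s + 4 * (N:ℝ) with hts
    have htp : 0 < t := by positivity
    have hit := LL_iterate C b hfun hineq s hs N
    rw [← hts] at hit
    have hLt := LL_ge t htp
    have hbtub := b_lt C b hfun hineq t htp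
    have h1 : b s * t ≤ LL s * (t + 1) := by nlinarith [hit, hLt, hbtub, hbspos, hLs]
    have h2 : LL s * (1 + 1 / t) = LL s * (t + 1) / t := by field_simp
    rw [h2, le_div_iff₀ htp]
    linarith [h1]
  have hdn : ∀ N : ℕ, LL s * (s + 4 * (N:ℝ)) ≤ b s * (s + 4 * (N:ℝ) + 1 / (2 * s)) := by
    intro N
    set t := s + 4 * (N:ℝ) with hts
    have htp : 0 < t := by positivity
    have hit := LL_iterate C b hfun hineq s hs N
    rw [← hts] at hit
    have hLtub : LL t ≤ t + 1 / (2 * t) := LL_le' t htp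
    clear_value t
    have hbtlb := (hb t htp).1
    have hst : s ≤ t := by
      have : (0:ℝ) ≤ (N:ℝ) := Nat.cast_nonneg N
      rw [hts]; linarith
    have hfrac : 1 / (2 * t) ≤ 1 / (2 * s) := by
      apply div_le_div_of_nonneg_left (by norm_num) (by positivity) (by linarith)
    have h1 : LL s * t ≤ LL s * b t := by nlinarith [hbtlb, hLs]
    have h2 : LL s * b t = b s * LL t := hit
    have h3 : b s * LL t ≤ b s * (t + 1 / (2 * s)) := by nlinarith [hLtub, hfrac, hbspos]
    linarith
  -- pass to the limit
  have key1 : b s ≤ LL s := by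
    have hl : Tendsto (fun N : ℕ => LL s * (1 + 1 / (s + 4 * (N:ℝ)))) atTop (nhds (LL s)) := by
      have h1 := (tendsto_ratio s hs 1).const_add (1:ℝ)
      have := h1.const_mul (LL s)
      simpa using this
    exact ge_of_tendsto hl (Filter.Eventually.of_forall hup)
  have key2 : LL s ≤ b s := by
    have hl : Tendsto (fun N : ℕ => b s * (1 + (1 / (2 * s)) / (s + 4 * (N:ℝ)))) atTop
        (nhds (b s)) := by
      have h1 := (tendsto_ratio s hs (1 / (2 * s))).const_add (1:ℝ)
      have := h1.const_mul (b s)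
      simpa using this
    apply ge_of_tendsto hl
    apply Filter.Eventually.of_forall
    intro N
    have h := hdn N
    set t := s + 4 * (N:ℝ) with hts
    have htp : 0 < t := by positivity
    clear_value t
    have hsne : s ≠ 0 := ne_of_gt hs
    have htne : t ≠ 0 := ne_of_gt htp
    have h2 : b s * (1 + (1 / (2 * s)) / t) = b s * (t + 1 / (2 * s)) / t := by
      rw [mul_div_assoc]
      congr 1
      field_simp
    rw [h2, le_div_iff₀ htp]
    linarith [h]
  linarith

end Final

theorem brouncker_product_and_cf (C : ℝ) (hC : 0 < C) (b : ℝ → ℝ)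
    (hfun : ∀ s : ℝ, 0 < s → b s * b (s + 2) = (s + 1) ^ 2)
    (hineq : ∀ s : ℝ, C < s → s < b s) :
    ∀ s : ℝ, 0 < s →
      Tendsto (fun N : ℕ => (s + 1) * ∏ n ∈ Finset.range N,
          ((s + 4 * ((n : ℝ) + 1) - 3) * (s + 4 * ((n : ℝ) + 1) + 1)) /
            (s + 4 * ((n : ℝ) + 1) - 1) ^ 2) atTop (nhds (b s)) ∧
      IsCFLimit s (fun n => (2 * (n : ℝ) - 1) ^ 2) (fun _ => 2 * s) (b s) := by
  intro s hs
  constructor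
  · exact PP_tendsto C b hfun hineq s hs
  · have h := xx_tendsto s hs
    rw [LL_eq_b C b hfun hineq s hs] at h
    exact h
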